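/- Let H be a real or complex Banach space, M ≥ 1 and ω ∈ ℝ constants, and S : [0,∞) → B(H) a strongly continuous family of bounded linear operators on H with ‖S(t)‖ ≤ M·e^{ωt} for all t ≥ 0. Let B : H → H be a bounded linear operator, x₀ ∈ H, t > 0, and u ∈ L²(0,t). Then for every k ≥ 1 the Volterra term V_k(t;u) = ∫₀^t ∫₀^{σ_k} ⋯ ∫₀^{σ₂} S(t−σ_k) B S(σ_k−σ_{k−1}) B ⋯ B S(σ₁) x₀ · u(σ₁) ⋯ u(σ_k) dσ₁ ⋯ dσ_k satisfies ‖V_k(t;u)‖ ≤ M · e^{ωt} · ‖x₀‖ · (M · ‖B‖ · √t · ‖u‖_{L²(0,t)})^k. -/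

import Mathlib

open MeasureTheory

/-- The pair consisting of `B S(σ_k − σ_{k−1}) B ⋯ B S(σ₁) x₀` together with the last time
`σ_k` (for `k = 0`, the pair `(x₀, 0)`). -/
noncomputable def volterraChain {𝕜 H : Type*} [RCLike 𝕜] [NormedAddCommGroup H]
    [NormedSpace 𝕜 H] (S : ℝ → H →L[𝕜] H) (B : H →L[𝕜] H) (x₀ : H) :
    (k : ℕ) → (Fin k → ℝ) → H × ℝ
  | 0, _ => (x₀, 0)
  | k + 1, σ =>
    let p := volterraChain S B x₀ k (σ ∘ Fin.castSucc)
    (B (S (σ (Fin.last k) - p.2) p.1), σ (Fin.last k))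

/-- The Volterra kernel `w_k(t, σ₁, …, σ_k) = S(t − σ_k) B S(σ_k − σ_{k−1}) B ⋯ B S(σ₁) x₀`. -/
noncomputable def volterraKernel {𝕜 H : Type*} [RCLike 𝕜] [NormedAddCommGroup H]
    [NormedSpace 𝕜 H] (S : ℝ → H →L[𝕜] H) (B : H →L[𝕜] H) (x₀ : H)
    (t : ℝ) (k : ℕ) (σ : Fin k → ℝ) : H :=
  S (t - (volterraChain S B x₀ k σ).2) (volterraChain S B x₀ k σ).1

/-- The ordered simplex `{(σ₁, …, σ_k) : 0 ≤ σ₁ ≤ σ₂ ≤ ⋯ ≤ σ_k ≤ t}`. -/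
def orderedSimplex (k : ℕ) (t : ℝ) : Set (Fin k → ℝ) :=
  {σ | Monotone σ ∧ ∀ i, σ i ∈ Set.Icc (0 : ℝ) t}

/-- The `k`-th Volterra term
`V_k(t;u) = ∫…∫_{0 ≤ σ₁ ≤ ⋯ ≤ σ_k ≤ t} w_k(t,σ₁,…,σ_k) u(σ₁) ⋯ u(σ_k) dσ₁ ⋯ dσ_k`. -/
noncomputable def volterraTerm {𝕜 H : Type*} [RCLike 𝕜] [NormedAddCommGroup H]
    [NormedSpace 𝕜 H] [NormedSpace ℝ H] (S : ℝ → H →L[𝕜] H) (B : H →L[𝕜] H) (x₀ : H)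
    (t : ℝ) (u : ℝ → ℝ) (k : ℕ) : H :=
  ∫ σ in orderedSimplex k t, (∏ i, u (σ i)) • volterraKernel S B x₀ t k σ

/-- The `L²` norm of `u` on `(0, t)`. -/
noncomputable def L2NormOn (u : ℝ → ℝ) (t : ℝ) : ℝ :=
  (∫ σ in Set.Ioc (0 : ℝ) t, (u σ) ^ 2) ^ (1 / 2 : ℝ)

lemma measurableSet_orderedSimplex (k : ℕ) (t : ℝ) :
    MeasurableSet (orderedSimplex k t) := by
  have h : orderedSimplex k t =
      (⋂ i, ⋂ j, ⋂ (_ : i ≤ j), {σ : Fin k → ℝ | σ i ≤ σ j}) ∩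
        ⋂ i, (fun σ : Fin k → ℝ => σ i) ⁻¹' (Set.Icc 0 t) := by
    ext σ
    simp only [orderedSimplex, Set.mem_setOf_eq, Set.mem_inter_iff, Set.mem_iInter,
      Set.mem_preimage]
    exact ⟨fun ⟨h1, h2⟩ => ⟨fun i j hij => h1 hij, h2⟩,
      fun ⟨h1, h2⟩ => ⟨fun i j hij => h1 i j hij, h2⟩⟩
  rw [h]
  exact (MeasurableSet.iInter fun i => MeasurableSet.iInter fun j =>
      MeasurableSet.iInter fun _ => measurableSet_le (measurable_pi_apply i)
        (measurable_pi_apply j)).inter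
    (MeasurableSet.iInter fun i => (measurable_pi_apply i) measurableSet_Icc)

lemma volterraChain_bound {𝕜 H : Type*} [RCLike 𝕜] [NormedAddCommGroup H]
    [NormedSpace 𝕜 H] (M ω : ℝ) (hM : 1 ≤ M) (S : ℝ → H →L[𝕜] H)
    (hS : ∀ s : ℝ, 0 ≤ s → ‖S s‖ ≤ M * Real.exp (ω * s))
    (B : H →L[𝕜] H) (x₀ : H) :
    ∀ (k : ℕ) (σ : Fin k → ℝ), Monotone σ → (∀ i, 0 ≤ σ i) →
      ∀ b : ℝ, 0 ≤ b → (∀ i, σ i ≤ b) →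
      0 ≤ (volterraChain S B x₀ k σ).2 ∧ (volterraChain S B x₀ k σ).2 ≤ b ∧
        ‖(volterraChain S B x₀ k σ).1‖ ≤
          (M * ‖B‖) ^ k * Real.exp (ω * (volterraChain S B x₀ k σ).2) * ‖x₀‖ := by
  intro k
  induction k with
  | zero =>
    intro σ _ _ b hb _
    simp [volterraChain, hb]
  | succ k ih =>
    intro σ hmono h0 b hb hbd
    have hlast : 0 ≤ σ (Fin.last k) := h0 _
    obtain ⟨hp0, hpb, hpn⟩ := ih (σ ∘ Fin.castSucc)
      (hmono.comp (Fin.strictMono_castSucc.monotone))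
      (fun i => h0 _) (σ (Fin.last k)) hlast
      (fun i => hmono (Fin.le_last _))
    refine ⟨hlast, hbd _, ?_⟩
    show ‖B (S (σ (Fin.last k) - (volterraChain S B x₀ k (σ ∘ Fin.castSucc)).2)
        (volterraChain S B x₀ k (σ ∘ Fin.castSucc)).1)‖ ≤ _
    set p := volterraChain S B x₀ k (σ ∘ Fin.castSucc)
    have hd : 0 ≤ σ (Fin.last k) - p.2 := by linarith
    have hM0 : (0:ℝ) ≤ M := by linarith
    have hexp : Real.exp (ω * (σ (Fin.last k) - p.2)) * Real.exp (ω * p.2)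
        = Real.exp (ω * σ (Fin.last k)) := by
      rw [← Real.exp_add]; congr 1; ring
    calc ‖B (S (σ (Fin.last k) - p.2) p.1)‖
        ≤ ‖B‖ * ‖S (σ (Fin.last k) - p.2) p.1‖ := B.le_opNorm _
      _ ≤ ‖B‖ * (‖S (σ (Fin.last k) - p.2)‖ * ‖p.1‖) := by
          gcongr; exact (S _).le_opNorm _
      _ ≤ ‖B‖ * ((M * Real.exp (ω * (σ (Fin.last k) - p.2))) *
            ((M * ‖B‖) ^ k * Real.exp (ω * p.2) * ‖x₀‖)) := by
          have h1 := hS _ hd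
          have h2 : (0:ℝ) ≤ ‖p.1‖ := norm_nonneg _
          have h3 : (0:ℝ) ≤ M * Real.exp (ω * (σ (Fin.last k) - p.2)) := by positivity
          gcongr ‖B‖ * ?_
          exact mul_le_mul h1 hpn h2 h3
      _ = (M * ‖B‖) ^ (k + 1) *
            Real.exp (ω * σ (Fin.last k)) * ‖x₀‖ := by
          rw [pow_succ, ← hexp]; ring

lemma volterraKernel_bound {𝕜 H : Type*} [RCLike 𝕜] [NormedAddCommGroup H]
    [NormedSpace 𝕜 H] (M ω : ℝ) (hM : 1 ≤ M) (S : ℝ → H →L[𝕜] H)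
    (hS : ∀ s : ℝ, 0 ≤ s → ‖S s‖ ≤ M * Real.exp (ω * s))
    (B : H →L[𝕜] H) (x₀ : H) (t : ℝ) (ht : 0 ≤ t) (k : ℕ) (σ : Fin k → ℝ)
    (hσ : σ ∈ orderedSimplex k t) :
    ‖volterraKernel S B x₀ t k σ‖ ≤
      M * Real.exp (ω * t) * ‖x₀‖ * (M * ‖B‖) ^ k := by
  obtain ⟨hmono, hmem⟩ := hσ
  obtain ⟨hp0, hpt, hpn⟩ := volterraChain_bound M ω hM S hS B x₀ k σ hmono
    (fun i => (hmem i).1) t ht (fun i => (hmem i).2)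
  set p := volterraChain S B x₀ k σ
  have hd : 0 ≤ t - p.2 := by linarith
  have hM0 : (0:ℝ) ≤ M := by linarith
  have hexp : Real.exp (ω * (t - p.2)) * Real.exp (ω * p.2) = Real.exp (ω * t) := by
    rw [← Real.exp_add]; congr 1; ring
  calc ‖S (t - p.2) p.1‖
      ≤ ‖S (t - p.2)‖ * ‖p.1‖ := (S _).le_opNorm _
    _ ≤ (M * Real.exp (ω * (t - p.2))) *
          ((M * ‖B‖) ^ k * Real.exp (ω * p.2) * ‖x₀‖) :=
        mul_le_mul (hS _ hd) hpn (norm_nonneg _) (by positivity)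
    _ = M * Real.exp (ω * t) * ‖x₀‖ * (M * ‖B‖) ^ k := by
        rw [← hexp]; ring

/-- Cauchy–Schwarz: `∫_{Ioc 0 t} |u| ≤ √t ⬝ √(∫_{Ioc 0 t} u²)`. -/
lemma abs_integral_cs (u : ℝ → ℝ) (t : ℝ) (ht : 0 < t)
    (hu : MemLp u 2 (volume.restrict (Set.Ioc (0 : ℝ) t))) :
    ∫ s in Set.Ioc (0:ℝ) t, |u s| ≤
      Real.sqrt t * Real.sqrt (∫ s in Set.Ioc (0:ℝ) t, u s ^ 2) := by
  haveI : IsFiniteMeasure (volume.restrict (Set.Ioc (0:ℝ) t)) :=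
    ⟨by rw [Measure.restrict_apply_univ]; exact measure_Ioc_lt_top⟩
  set A := ∫ s in Set.Ioc (0:ℝ) t, u s ^ 2 with hA
  have hsq : Integrable (fun s => u s ^ 2) (volume.restrict (Set.Ioc (0:ℝ) t)) :=
    hu.integrable_sq
  have habs : Integrable (fun s => |u s|) (volume.restrict (Set.Ioc (0:ℝ) t)) :=
    (hu.integrable one_le_two).abs
  have hA0 : 0 ≤ A := integral_nonneg fun s => sq_nonneg _
  rcases hA0.eq_or_lt with hA0' | hApos
  · -- A = 0 : u = 0 a.e.
    have hz : (fun s => u s ^ 2) =ᵐ[volume.restrict (Set.Ioc (0:ℝ) t)] 0 := by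
      rw [← integral_eq_zero_iff_of_nonneg (fun s => sq_nonneg (u s)) hsq]
      exact hA0'.symm
    have hz' : (fun s => |u s|) =ᵐ[volume.restrict (Set.Ioc (0:ℝ) t)] 0 := by
      filter_upwards [hz] with s hs
      simp only [Pi.zero_apply] at hs ⊢
      have : u s = 0 := by nlinarith [sq_nonneg (u s)]
      simp [this]
    rw [integral_congr_ae hz']
    simp only [Pi.zero_apply, integral_zero]
    positivity
  · set ε := Real.sqrt t / Real.sqrt A with hε
    have hst : 0 < Real.sqrt t := Real.sqrt_pos.2 ht
    have hsA : 0 < Real.sqrt A := Real.sqrt_pos.2 hApos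
    have hεpos : 0 < ε := div_pos hst hsA
    have hptw : ∀ s, |u s| ≤ (ε * u s ^ 2 + 1 / ε) / 2 := by
      intro s
      rw [le_div_iff₀ (by norm_num : (0:ℝ) < 2)]
      have key : ε * (|u s| * 2) ≤ ε * (ε * u s ^ 2 + 1 / ε) := by
        have h1 : 0 ≤ (ε * |u s| - 1) ^ 2 := sq_nonneg _
        have h2 : ε * (1 / ε) = 1 := mul_one_div_cancel hεpos.ne'
        have h3 : ε * (ε * u s ^ 2 + 1 / ε) = ε ^ 2 * u s ^ 2 + 1 := by
          rw [mul_add, h2]; ring_nf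
        rw [h3]
        nlinarith [sq_abs (u s)]
      exact le_of_mul_le_mul_left key hεpos
    have hint : Integrable (fun s => (ε * u s ^ 2 + 1 / ε) / 2)
        (volume.restrict (Set.Ioc (0:ℝ) t)) :=
      ((hsq.const_mul ε).add (integrable_const _)).div_const 2
    have hmono := integral_mono habs hint hptw
    have hval : ∫ s in Set.Ioc (0:ℝ) t, (ε * u s ^ 2 + 1 / ε) / 2
        = (ε * A + t * (1 / ε)) / 2 := by
      rw [integral_div, integral_add (hsq.const_mul ε) (integrable_const _),
        integral_const_mul, integral_const]
      simp [Real.volume_Ioc, ENNReal.toReal_ofReal ht.le, smul_eq_mul]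
      rw [max_eq_left ht.le]
    have hfinal : (ε * A + t * (1 / ε)) / 2 = Real.sqrt t * Real.sqrt A := by
      have h1 : Real.sqrt t ^ 2 = t := Real.sq_sqrt ht.le
      have h2 : Real.sqrt A ^ 2 = A := Real.sq_sqrt hA0
      rw [hε]
      field_simp
      nlinarith [hst, hsA]
    rw [hval, hfinal] at hmono
    exact hmono

theorem stmt_15 {𝕜 H : Type*} [RCLike 𝕜] [NormedAddCommGroup H] [NormedSpace 𝕜 H]
    [NormedSpace ℝ H] [IsScalarTower ℝ 𝕜 H] [CompleteSpace H]
    (M ω : ℝ) (hM : 1 ≤ M) (S : ℝ → H →L[𝕜] H)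
    (hScont : ∀ x : H, ContinuousOn (fun s => S s x) (Set.Ici (0 : ℝ)))
    (hS : ∀ s : ℝ, 0 ≤ s → ‖S s‖ ≤ M * Real.exp (ω * s))
    (B : H →L[𝕜] H) (x₀ : H) (t : ℝ) (ht : 0 < t) (u : ℝ → ℝ)
    (hu : MemLp u 2 (volume.restrict (Set.Ioc (0 : ℝ) t)))
    (k : ℕ) (hk : 1 ≤ k) :
    ‖volterraTerm S B x₀ t u k‖ ≤
      M * Real.exp (ω * t) * ‖x₀‖ *
        (M * ‖B‖ * Real.sqrt t * L2NormOn u t) ^ k := by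
  haveI : IsFiniteMeasure (volume.restrict (Set.Ioc (0:ℝ) t)) :=
    ⟨by rw [Measure.restrict_apply_univ]; exact measure_Ioc_lt_top⟩
  have hM0 : (0:ℝ) ≤ M := by linarith
  set C : ℝ := M * Real.exp (ω * t) * ‖x₀‖ * (M * ‖B‖) ^ k with hC
  have hC0 : 0 ≤ C := by positivity
  -- the truncated |u|
  set v : ℝ → ℝ := (Set.Icc (0:ℝ) t).indicator (fun s => |u s|) with hv
  have hrest : volume.restrict (Set.Icc (0:ℝ) t) = volume.restrict (Set.Ioc (0:ℝ) t) :=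
    (Measure.restrict_congr_set Ioc_ae_eq_Icc).symm
  have habsIcc : Integrable (fun s => |u s|) (volume.restrict (Set.Icc (0:ℝ) t)) := by
    rw [hrest]; exact (hu.integrable one_le_two).abs
  have hvInt : Integrable v :=
    (integrable_indicator_iff measurableSet_Icc).2 habsIcc
  have hv0 : ∀ s, 0 ≤ v s := fun s =>
    Set.indicator_nonneg (fun s _ => abs_nonneg _) s
  -- the majorant
  have hFInt : Integrable (fun σ : Fin k → ℝ => C * ∏ i, v (σ i)) :=
    (Integrable.fintype_prod (f := fun _ : Fin k => v) fun _ => hvInt).const_mul C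
  have step1 : ‖volterraTerm S B x₀ t u k‖ ≤
      ∫ σ in orderedSimplex k t, ‖(∏ i, u (σ i)) • volterraKernel S B x₀ t k σ‖ :=
    norm_integral_le_integral_norm _
  have step2 : ∫ σ in orderedSimplex k t,
        ‖(∏ i, u (σ i)) • volterraKernel S B x₀ t k σ‖ ≤
      ∫ σ in orderedSimplex k t, C * ∏ i, v (σ i) := by
    refine integral_mono_of_nonneg (Filter.Eventually.of_forall fun σ => norm_nonneg _)
      hFInt.restrict ?_
    filter_upwards [ae_restrict_mem (measurableSet_orderedSimplex k t)] with σ hσ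
    rw [norm_smul, Real.norm_eq_abs, Finset.abs_prod]
    have hprod : ∏ i, |u (σ i)| = ∏ i, v (σ i) := by
      refine Finset.prod_congr rfl fun i _ => ?_
      rw [hv, Set.indicator_of_mem (hσ.2 i)]
    rw [hprod]
    rw [mul_comm C]
    exact mul_le_mul_of_nonneg_left
      (volterraKernel_bound M ω hM S hS B x₀ t ht.le k σ hσ)
      (Finset.prod_nonneg fun i _ => hv0 _)
  have step3 : ∫ σ in orderedSimplex k t, C * ∏ i, v (σ i) ≤
      ∫ σ : Fin k → ℝ, C * ∏ i, v (σ i) :=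
    setIntegral_le_integral hFInt
      (Filter.Eventually.of_forall fun σ =>
        mul_nonneg hC0 (Finset.prod_nonneg fun i _ => hv0 _))
  have step4 : ∫ σ : Fin k → ℝ, C * ∏ i, v (σ i) = C * (∫ s, v s) ^ k := by
    rw [integral_const_mul, integral_fintype_prod_volume_eq_pow (ι := Fin k) v, Fintype.card_fin]
  have hIv : ∫ s, v s = ∫ s in Set.Ioc (0:ℝ) t, |u s| := by
    rw [hv, integral_indicator measurableSet_Icc, ← hrest]
  have hIv0 : 0 ≤ ∫ s, v s := integral_nonneg hv0
  have hcs : ∫ s, v s ≤ Real.sqrt t * L2NormOn u t := by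
    rw [hIv]
    have := abs_integral_cs u t ht hu
    rwa [L2NormOn, ← Real.sqrt_eq_rpow]
  calc ‖volterraTerm S B x₀ t u k‖
      ≤ C * (∫ s, v s) ^ k := by
        exact step1.trans (step2.trans (step3.trans step4.le))
    _ ≤ C * (Real.sqrt t * L2NormOn u t) ^ k :=
        mul_le_mul_of_nonneg_left (pow_le_pow_left₀ hIv0 hcs k) hC0
    _ = M * Real.exp (ω * t) * ‖x₀‖ *
          (M * ‖B‖ * Real.sqrt t * L2NormOn u t) ^ k := by
        rw [hC, mul_assoc (M * Real.exp (ω * t) * ‖x₀‖), ← mul_pow]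
        ring
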